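/- If A is a square matrix over \widehat{ℤG}_χ with ‖A‖ < 1, then I − A is invertible in the matrix ring over \widehat{ℤG}_χ, and ‖(I − A)⁻¹‖ ≤ 1. -/

import Mathlib

variable {G : Type*}

/-- The Novikov support condition: for every `r : ℝ` the set
`supp(l) ∩ χ⁻¹([r,∞))` is finite.  The Novikov ring `ℤG^` is the set of
functions `l : G → ℤ` satisfying this condition. -/
def NovikovCond [Group G] (χ : G → ℝ) (l : G → ℤ) : Prop :=
  ∀ r : ℝ, {g : G | l g ≠ 0 ∧ r ≤ χ g}.Finite

/-- Convolution product `(l₁·l₂)(g) = Σ_{h₁h₂=g} l₁(h₁)·l₂(h₂)`. -/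
noncomputable def novConv [Group G] (l₁ l₂ : G → ℤ) : G → ℤ :=
  fun g => ∑ᶠ p ∈ {p : G × G | p.1 * p.2 = g}, l₁ p.1 * l₂ p.2

open Classical in
/-- The unit of the Novikov ring: the indicator function of the identity of `G`. -/
noncomputable def novOne [Group G] : G → ℤ :=
  fun g => if g = 1 then 1 else 0

open Classical in
/-- The norm `‖l‖ = exp (sup {χ g | g ∈ supp l})` for `l ≠ 0`, and `‖0‖ = 0`. -/
noncomputable def novNorm [Group G] (χ : G → ℝ) (l : G → ℤ) : ℝ :=
  if l = 0 then 0 else Real.exp (sSup {x : ℝ | ∃ g : G, l g ≠ 0 ∧ χ g = x})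

/-- Product of matrices over the Novikov ring (entrywise convolution products). -/
noncomputable def matMulNov [Group G] {m n p : ℕ}
    (A : Matrix (Fin m) (Fin n) (G → ℤ)) (B : Matrix (Fin n) (Fin p) (G → ℤ)) :
    Matrix (Fin m) (Fin p) (G → ℤ) :=
  Matrix.of fun i j => ∑ k : Fin n, novConv (A i k) (B k j)

/-- The identity matrix over the Novikov ring. -/
noncomputable def matIdNov [Group G] (n : ℕ) : Matrix (Fin n) (Fin n) (G → ℤ) :=
  Matrix.of fun i j => if i = j then novOne else 0

/-- The norm of a matrix over the Novikov ring: the maximum of the norms of its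
entries (`0` for empty matrices). -/
noncomputable def matNorm [Group G] (χ : G → ℝ) {m n : ℕ}
    (A : Matrix (Fin m) (Fin n) (G → ℤ)) : ℝ :=
  ⨆ i, ⨆ j, novNorm χ (A i j)

section NovAux

open Function

variable [Group G] {χ : G → ℝ}

lemma chi_one (hχ : ∀ a b : G, χ (a * b) = χ a + χ b) : χ 1 = 0 := by
  have := hχ 1 1; simp at this; linarith

lemma nov_bound {l : G → ℤ} (hl : NovikovCond χ l) :
    ∃ c : ℝ, ∀ g, l g ≠ 0 → χ g ≤ c := by
  obtain ⟨c0, hc0⟩ := Set.Finite.bddAbove ((hl 0).image χ)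
  refine ⟨max c0 0, fun g hg => ?_⟩
  rcases le_or_gt 0 (χ g) with h | h
  · exact le_max_of_le_left (hc0 ⟨g, ⟨hg, h⟩, rfl⟩)
  · exact le_max_of_le_right h.le

lemma conv_eq (l₁ l₂ : G → ℤ) (g : G) :
    novConv l₁ l₂ g = ∑ᶠ h, l₁ h * l₂ (h⁻¹ * g) := by
  have hset : {p : G × G | p.1 * p.2 = g} = Set.range (fun h : G => (h, h⁻¹ * g)) := by
    ext p
    simp only [Set.mem_setOf_eq, Set.mem_range]
    constructor
    · intro hp
      exact ⟨p.1, by rw [← hp, inv_mul_cancel_left]⟩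
    · rintro ⟨h, rfl⟩
      simp [mul_inv_cancel_left]
  show (∑ᶠ p ∈ {p : G × G | p.1 * p.2 = g}, l₁ p.1 * l₂ p.2) = _
  rw [hset, finsum_mem_range]
  intro a b hab
  exact (Prod.ext_iff.1 hab).1

lemma conv_supp_fin (hχ : ∀ a b : G, χ (a * b) = χ a + χ b)
    {l₁ l₂ : G → ℤ} (hl₁ : NovikovCond χ l₁) {c₂ : ℝ}
    (hc₂ : ∀ x, l₂ x ≠ 0 → χ x ≤ c₂) (g : G) :
    (support fun h => l₁ h * l₂ (h⁻¹ * g)).Finite := by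
  apply (hl₁ (χ g - c₂)).subset
  intro h hh
  simp only [mem_support] at hh
  have h1 : l₁ h ≠ 0 := left_ne_zero_of_mul hh
  have h2 : l₂ (h⁻¹ * g) ≠ 0 := right_ne_zero_of_mul hh
  have hb := hc₂ _ h2
  have e : χ h + χ (h⁻¹ * g) = χ g := by rw [← hχ, mul_inv_cancel_left]
  exact ⟨h1, by linarith⟩

lemma conv_ne_zero {l₁ l₂ : G → ℤ} {g : G} (h : novConv l₁ l₂ g ≠ 0) :
    ∃ h₀ : G, l₁ h₀ ≠ 0 ∧ l₂ (h₀⁻¹ * g) ≠ 0 := by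
  rw [conv_eq] at h
  obtain ⟨h₀, hh₀⟩ : ∃ h₀, l₁ h₀ * l₂ (h₀⁻¹ * g) ≠ 0 := by
    by_contra hcon
    push_neg at hcon
    exact h (finsum_eq_zero_of_forall_eq_zero hcon)
  exact ⟨h₀, left_ne_zero_of_mul hh₀, right_ne_zero_of_mul hh₀⟩

lemma conv_support_le (hχ : ∀ a b : G, χ (a * b) = χ a + χ b)
    {l₁ l₂ : G → ℤ} {c₁ c₂ : ℝ}
    (hc₁ : ∀ x, l₁ x ≠ 0 → χ x ≤ c₁) (hc₂ : ∀ x, l₂ x ≠ 0 → χ x ≤ c₂)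
    {g : G} (h : novConv l₁ l₂ g ≠ 0) : χ g ≤ c₁ + c₂ := by
  obtain ⟨h₀, e1, e2⟩ := conv_ne_zero h
  have e : χ h₀ + χ (h₀⁻¹ * g) = χ g := by rw [← hχ, mul_inv_cancel_left]
  have := hc₁ _ e1
  have := hc₂ _ e2
  linarith

lemma conv_novikov (hχ : ∀ a b : G, χ (a * b) = χ a + χ b)
    {l₁ l₂ : G → ℤ} (h₁ : NovikovCond χ l₁) (h₂ : NovikovCond χ l₂) :
    NovikovCond χ (novConv l₁ l₂) := by
  obtain ⟨c₁, hc₁⟩ := nov_bound h₁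
  obtain ⟨c₂, hc₂⟩ := nov_bound h₂
  intro r
  have hsub : {g | novConv l₁ l₂ g ≠ 0 ∧ r ≤ χ g} ⊆
      (fun p : G × G => p.1 * p.2) ''
        ({h | l₁ h ≠ 0 ∧ r - c₂ ≤ χ h} ×ˢ {h | l₂ h ≠ 0 ∧ r - c₁ ≤ χ h}) := by
    rintro g ⟨hg, hrg⟩
    obtain ⟨h₀, e1, e2⟩ := conv_ne_zero hg
    have e : χ h₀ + χ (h₀⁻¹ * g) = χ g := by rw [← hχ, mul_inv_cancel_left]
    have b1 := hc₁ _ e1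
    have b2 := hc₂ _ e2
    refine ⟨(h₀, h₀⁻¹ * g), ⟨⟨e1, by linarith⟩, ⟨e2, by linarith⟩⟩, ?_⟩
    simp [mul_inv_cancel_left]
  exact (((h₁ (r - c₂)).prod (h₂ (r - c₁))).image _).subset hsub

lemma conv_zero_left (l : G → ℤ) : novConv 0 l = 0 := by
  funext g
  rw [conv_eq]
  simp

lemma conv_zero_right (l : G → ℤ) : novConv l 0 = 0 := by
  funext g
  rw [conv_eq]
  simp

lemma conv_one_left (l : G → ℤ) : novConv novOne l = l := by
  funext g
  rw [conv_eq]
  rw [finsum_eq_single _ (1 : G) (fun x hx => by simp [novOne, hx])]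
  simp [novOne]

lemma conv_one_right (l : G → ℤ) : novConv l novOne = l := by
  funext g
  rw [conv_eq]
  rw [finsum_eq_single _ g (fun x hx => by
    have : x⁻¹ * g ≠ 1 := fun hc => hx (inv_mul_eq_one.mp hc)
    simp [novOne, this])]
  simp [novOne]

lemma conv_congr_right (l f f' : G → ℤ) (g : G)
    (h : ∀ h₀, l h₀ ≠ 0 → f (h₀⁻¹ * g) = f' (h₀⁻¹ * g)) :
    novConv l f g = novConv l f' g := by
  rw [conv_eq, conv_eq]
  apply finsum_congr
  intro x
  by_cases hx : l x = 0
  · simp [hx]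
  · rw [h x hx]

lemma conv_congr_left (l l' f : G → ℤ) (g : G)
    (h : ∀ h₀, f (h₀⁻¹ * g) ≠ 0 → l h₀ = l' h₀) :
    novConv l f g = novConv l' f g := by
  rw [conv_eq, conv_eq]
  apply finsum_congr
  intro x
  by_cases hx : f (x⁻¹ * g) = 0
  · simp [hx]
  · rw [h x hx]

lemma conv_sum_right (hχ : ∀ a b : G, χ (a * b) = χ a + χ b)
    {l : G → ℤ} (hl : NovikovCond χ l) {ι : Type*} (s : Finset ι) (f : ι → G → ℤ)
    (hf : ∀ k ∈ s, NovikovCond χ (f k)) :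
    novConv l (∑ k ∈ s, f k) = ∑ k ∈ s, novConv l (f k) := by
  funext g
  rw [conv_eq]
  have e1 : (fun h => l h * (∑ k ∈ s, f k) (h⁻¹ * g)) =
      fun h => ∑ k ∈ s, l h * f k (h⁻¹ * g) := by
    funext h
    rw [Finset.sum_apply, Finset.mul_sum]
  rw [e1, finsum_sum_comm]
  · rw [Finset.sum_apply]
    exact Finset.sum_congr rfl fun k _ => (conv_eq l (f k) g).symm
  · intro k hk
    obtain ⟨ck, hck⟩ := nov_bound (hf k hk)
    exact conv_supp_fin hχ hl hck g

lemma conv_sum_left (hχ : ∀ a b : G, χ (a * b) = χ a + χ b)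
    {l : G → ℤ} (hl : NovikovCond χ l) {ι : Type*} (s : Finset ι) (f : ι → G → ℤ)
    (hf : ∀ k ∈ s, NovikovCond χ (f k)) :
    novConv (∑ k ∈ s, f k) l = ∑ k ∈ s, novConv (f k) l := by
  obtain ⟨c, hc⟩ := nov_bound hl
  funext g
  rw [conv_eq]
  have e1 : (fun h => (∑ k ∈ s, f k) h * l (h⁻¹ * g)) =
      fun h => ∑ k ∈ s, f k h * l (h⁻¹ * g) := by
    funext h
    rw [Finset.sum_apply, Finset.sum_mul]
  rw [e1, finsum_sum_comm]
  · rw [Finset.sum_apply]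
    exact Finset.sum_congr rfl fun k _ => (conv_eq (f k) l g).symm
  · intro k hk
    exact conv_supp_fin hχ (hf k hk) hc g

lemma conv_sub_left (hχ : ∀ a b : G, χ (a * b) = χ a + χ b)
    {l l' l₂ : G → ℤ} (hl : NovikovCond χ l) (hl' : NovikovCond χ l')
    {c : ℝ} (hc : ∀ x, l₂ x ≠ 0 → χ x ≤ c) :
    novConv (l - l') l₂ = novConv l l₂ - novConv l' l₂ := by
  funext g
  rw [Pi.sub_apply, conv_eq, conv_eq, conv_eq]
  have e1 : (fun h => (l - l') h * l₂ (h⁻¹ * g)) =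
      fun h => l h * l₂ (h⁻¹ * g) - l' h * l₂ (h⁻¹ * g) := by
    funext h
    rw [Pi.sub_apply, sub_mul]
  rw [e1, finsum_sub_distrib (conv_supp_fin hχ hl hc g) (conv_supp_fin hχ hl' hc g)]

lemma conv_sub_right (hχ : ∀ a b : G, χ (a * b) = χ a + χ b)
    {l₁ l l' : G → ℤ} (hl₁ : NovikovCond χ l₁)
    {c c' : ℝ} (hc : ∀ x, l x ≠ 0 → χ x ≤ c) (hc' : ∀ x, l' x ≠ 0 → χ x ≤ c') :
    novConv l₁ (l - l') = novConv l₁ l - novConv l₁ l' := by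
  funext g
  rw [Pi.sub_apply, conv_eq, conv_eq, conv_eq]
  have e1 : (fun h => l₁ h * (l - l') (h⁻¹ * g)) =
      fun h => l₁ h * l (h⁻¹ * g) - l₁ h * l' (h⁻¹ * g) := by
    funext h
    rw [Pi.sub_apply, mul_sub]
  rw [e1, finsum_sub_distrib (conv_supp_fin hχ hl₁ hc g) (conv_supp_fin hχ hl₁ hc' g)]

lemma conv_assoc (hχ : ∀ a b : G, χ (a * b) = χ a + χ b)
    {a b d : G → ℤ} (ha : NovikovCond χ a) (hb : NovikovCond χ b)
    (hd : NovikovCond χ d) :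
    novConv (novConv a b) d = novConv a (novConv b d) := by
  obtain ⟨ca, hca⟩ := nov_bound ha
  obtain ⟨cb, hcb⟩ := nov_bound hb
  obtain ⟨cd, hcd⟩ := nov_bound hd
  funext g
  -- the global support set
  set F : G × G → ℤ := fun q => a q.1 * b (q.1⁻¹ * q.2) * d (q.2⁻¹ * g) with hF
  have hFfin : (support F).Finite := by
    have hsub : support F ⊆ (fun q : G × G => (q.1, q.1 * q.2)) ''
        ({u | a u ≠ 0 ∧ χ g - cb - cd ≤ χ u} ×ˢ {v | b v ≠ 0 ∧ χ g - ca - cd ≤ χ v}) := by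
      intro q hq
      simp only [mem_support, hF] at hq
      have h1 : a q.1 ≠ 0 := left_ne_zero_of_mul (left_ne_zero_of_mul hq)
      have h2 : b (q.1⁻¹ * q.2) ≠ 0 := right_ne_zero_of_mul (left_ne_zero_of_mul hq)
      have h3 : d (q.2⁻¹ * g) ≠ 0 := right_ne_zero_of_mul hq
      have e1 : χ q.1 + χ (q.1⁻¹ * q.2) = χ q.2 := by rw [← hχ, mul_inv_cancel_left]
      have e2 : χ q.2 + χ (q.2⁻¹ * g) = χ g := by rw [← hχ, mul_inv_cancel_left]
      have b1 := hca _ h1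
      have b2 := hcb _ h2
      have b3 := hcd _ h3
      refine ⟨(q.1, q.1⁻¹ * q.2), ⟨⟨h1, by linarith⟩, ⟨h2, by linarith⟩⟩, ?_⟩
      simp [mul_inv_cancel_left]
    exact ((((ha (χ g - cb - cd)).prod (hb (χ g - ca - cd))).image _)).subset hsub
  have lhs : novConv (novConv a b) d g = ∑ᶠ u, ∑ᶠ v, F (u, v) := by
    rw [conv_eq]
    have e1 : (fun h => novConv a b h * d (h⁻¹ * g)) =
        fun h => ∑ᶠ u, a u * b (u⁻¹ * h) * d (h⁻¹ * g) := by
      funext h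
      rw [conv_eq]
      rw [finsum_mul _ _]
    rw [e1]
    -- now swap the two finsums
    have swapfin : (support fun q : G × G => F (q.2, q.1)).Finite := by
      have : (support fun q : G × G => F (q.2, q.1)) = Prod.swap '' support F := by
        ext q
        simp only [mem_support, Set.mem_image]
        constructor
        · intro hq; exact ⟨(q.2, q.1), hq, rfl⟩
        · rintro ⟨p, hp, rfl⟩; exact hp
      rw [this]
      exact hFfin.image _
    calc (∑ᶠ h, ∑ᶠ u, a u * b (u⁻¹ * h) * d (h⁻¹ * g))
        = ∑ᶠ q : G × G, F (q.2, q.1) := by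
          rw [finsum_curry _ swapfin]
      _ = ∑ᶠ q : G × G, F q := finsum_comp_equiv (Equiv.prodComm G G)
      _ = ∑ᶠ u, ∑ᶠ v, F (u, v) := by rw [finsum_curry _ hFfin]
  have rhs : novConv a (novConv b d) g = ∑ᶠ u, ∑ᶠ v, F (u, v) := by
    rw [conv_eq]
    apply finsum_congr
    intro u
    rw [conv_eq]
    have hfin2 : (support fun v => b v * d (v⁻¹ * (u⁻¹ * g))).Finite :=
      conv_supp_fin hχ hb hcd (u⁻¹ * g)
    rw [mul_finsum _ _]
    -- change variables v ↦ u * v in inner sum of F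
    have : (∑ᶠ v, F (u, v)) = ∑ᶠ v, a u * (b v * d (v⁻¹ * (u⁻¹ * g))) := by
      rw [← finsum_comp_equiv (Equiv.mulLeft u)]
      apply finsum_congr
      intro v
      simp only [hF, Equiv.coe_mulLeft]
      rw [inv_mul_cancel_left, mul_assoc, mul_inv_rev, mul_assoc]
    rw [this]
  rw [lhs, rhs]

lemma novikov_zero : NovikovCond χ (0 : G → ℤ) := by
  intro r
  convert Set.finite_empty
  ext g
  simp

lemma novikov_one : NovikovCond χ (novOne : G → ℤ) := by
  intro r
  apply (Set.finite_singleton (1 : G)).subset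
  intro g hg
  have : novOne g ≠ 0 := hg.1
  simp only [novOne, ne_eq, ite_eq_right_iff, Classical.not_imp] at this
  simp [this.1]

lemma novikov_sum {ι : Type*} (s : Finset ι) (f : ι → G → ℤ)
    (hf : ∀ k ∈ s, NovikovCond χ (f k)) :
    NovikovCond χ (∑ k ∈ s, f k) := by
  classical
  intro r
  have hsub : {g | (∑ k ∈ s, f k) g ≠ 0 ∧ r ≤ χ g} ⊆
      ⋃ k ∈ s, {g | f k g ≠ 0 ∧ r ≤ χ g} := by
    rintro g ⟨hg, hrg⟩
    rw [Finset.sum_apply] at hg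
    obtain ⟨k, hk, hkg⟩ := Finset.exists_ne_zero_of_sum_ne_zero hg
    exact Set.mem_biUnion hk ⟨hkg, hrg⟩
  exact (Set.Finite.biUnion s.finite_toSet fun k hk => hf k hk r).subset hsub

end NovAux

section MatAux

open Function

variable [Group G] {χ : G → ℝ} {n : ℕ}

lemma matMulNov_apply {m p q : ℕ} (A : Matrix (Fin m) (Fin p) (G → ℤ))
    (B : Matrix (Fin p) (Fin q) (G → ℤ)) (i : Fin m) (j : Fin q) :
    matMulNov A B i j = ∑ k : Fin p, novConv (A i k) (B k j) := rfl

lemma matId_novikov : ∀ i j : Fin n, NovikovCond χ (matIdNov n i j) := by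
  intro i j
  show NovikovCond χ (if i = j then novOne else 0)
  split
  · exact novikov_one
  · exact novikov_zero

lemma matMul_novikov (hχ : ∀ a b : G, χ (a * b) = χ a + χ b)
    {m p q : ℕ} {A : Matrix (Fin m) (Fin p) (G → ℤ)} {B : Matrix (Fin p) (Fin q) (G → ℤ)}
    (hA : ∀ i j, NovikovCond χ (A i j)) (hB : ∀ i j, NovikovCond χ (B i j)) :
    ∀ i j, NovikovCond χ (matMulNov A B i j) := by
  intro i j
  rw [matMulNov_apply]
  exact novikov_sum _ _ fun k _ => conv_novikov hχ (hA i k) (hB k j)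

lemma matMul_one_left (hχ : ∀ a b : G, χ (a * b) = χ a + χ b)
    (B : Matrix (Fin n) (Fin n) (G → ℤ)) :
    matMulNov (matIdNov n) B = B := by
  apply Matrix.ext
  intro i j
  rw [matMulNov_apply]
  rw [Finset.sum_eq_single i]
  · show novConv (if i = i then novOne else 0) (B i j) = B i j
    rw [if_pos rfl, conv_one_left]
  · intro k _ hk
    show novConv (if i = k then novOne else 0) (B k j) = 0
    rw [if_neg (fun h => hk h.symm), conv_zero_left]
  · intro h
    exact absurd (Finset.mem_univ i) h

lemma matMul_one_right (hχ : ∀ a b : G, χ (a * b) = χ a + χ b)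
    (B : Matrix (Fin n) (Fin n) (G → ℤ)) :
    matMulNov B (matIdNov n) = B := by
  apply Matrix.ext
  intro i j
  rw [matMulNov_apply]
  rw [Finset.sum_eq_single j]
  · show novConv (B i j) (if j = j then novOne else 0) = B i j
    rw [if_pos rfl, conv_one_right]
  · intro k _ hk
    show novConv (B i k) (if k = j then novOne else 0) = 0
    rw [if_neg hk, conv_zero_right]
  · intro h
    exact absurd (Finset.mem_univ j) h

lemma matMul_sub_left (hχ : ∀ a b : G, χ (a * b) = χ a + χ b)
    (X Y B : Matrix (Fin n) (Fin n) (G → ℤ))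
    (hX : ∀ i j, NovikovCond χ (X i j)) (hY : ∀ i j, NovikovCond χ (Y i j))
    (hB : ∀ i j, NovikovCond χ (B i j)) :
    matMulNov (X - Y) B = matMulNov X B - matMulNov Y B := by
  apply Matrix.ext
  intro i j
  rw [Matrix.sub_apply, matMulNov_apply, matMulNov_apply, matMulNov_apply, ← Finset.sum_sub_distrib]
  apply Finset.sum_congr rfl
  intro k _
  obtain ⟨c, hc⟩ := nov_bound (hB k j)
  have : (X - Y) i k = X i k - Y i k := rfl
  rw [this, conv_sub_left hχ (hX i k) (hY i k) hc]

lemma matMul_sub_right (hχ : ∀ a b : G, χ (a * b) = χ a + χ b)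
    (B X Y : Matrix (Fin n) (Fin n) (G → ℤ))
    (hB : ∀ i j, NovikovCond χ (B i j))
    (hX : ∀ i j, NovikovCond χ (X i j)) (hY : ∀ i j, NovikovCond χ (Y i j)) :
    matMulNov B (X - Y) = matMulNov B X - matMulNov B Y := by
  apply Matrix.ext
  intro i j
  rw [Matrix.sub_apply, matMulNov_apply, matMulNov_apply, matMulNov_apply,
    ← Finset.sum_sub_distrib]
  apply Finset.sum_congr rfl
  intro k _
  obtain ⟨c, hc⟩ := nov_bound (hX k j)
  obtain ⟨c', hc'⟩ := nov_bound (hY k j)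
  have e : (X - Y) k j = X k j - Y k j := rfl
  rw [e, conv_sub_right hχ (hB i k) hc hc']

lemma matMul_assoc (hχ : ∀ a b : G, χ (a * b) = χ a + χ b)
    (A B C : Matrix (Fin n) (Fin n) (G → ℤ))
    (hA : ∀ i j, NovikovCond χ (A i j)) (hB : ∀ i j, NovikovCond χ (B i j))
    (hC : ∀ i j, NovikovCond χ (C i j)) :
    matMulNov (matMulNov A B) C = matMulNov A (matMulNov B C) := by
  apply Matrix.ext
  intro i j
  rw [matMulNov_apply, matMulNov_apply]
  calc (∑ l : Fin n, novConv (matMulNov A B i l) (C l j))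
      = ∑ l : Fin n, ∑ k : Fin n, novConv (novConv (A i k) (B k l)) (C l j) := by
        apply Finset.sum_congr rfl
        intro l _
        rw [matMulNov_apply]
        exact conv_sum_left hχ (hC l j) _ _ fun k _ => conv_novikov hχ (hA i k) (hB k l)
    _ = ∑ k : Fin n, ∑ l : Fin n, novConv (A i k) (novConv (B k l) (C l j)) := by
        rw [Finset.sum_comm]
        exact Finset.sum_congr rfl fun k _ => Finset.sum_congr rfl fun l _ =>
          conv_assoc hχ (hA i k) (hB k l) (hC l j)
    _ = ∑ k : Fin n, novConv (A i k) (matMulNov B C k j) := by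
        apply Finset.sum_congr rfl
        intro k _
        rw [matMulNov_apply]
        exact (conv_sum_right hχ (hA i k) _ _ fun l _ => conv_novikov hχ (hB k l) (hC l j)).symm

end MatAux

/-- Powers of a matrix over the Novikov ring. -/
noncomputable def novPow [Group G] (n : ℕ) (A : Matrix (Fin n) (Fin n) (G → ℤ)) :
    ℕ → Matrix (Fin n) (Fin n) (G → ℤ)
  | 0 => matIdNov n
  | k + 1 => matMulNov A (novPow n A k)

/-- If `A` is a square matrix over `ℤG^_χ` with `‖A‖ < 1`, then
`I − A` is invertible in the matrix ring over `ℤG^_χ`, and `‖(I − A)⁻¹‖ ≤ 1`. -/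
theorem statement7 [Group G] (χ : G → ℝ) (hχ : ∀ a b : G, χ (a * b) = χ a + χ b)
    (n : ℕ) (A : Matrix (Fin n) (Fin n) (G → ℤ))
    (hA : ∀ i j, NovikovCond χ (A i j)) (hnorm : matNorm χ A < 1) :
    ∃ B : Matrix (Fin n) (Fin n) (G → ℤ),
      (∀ i j, NovikovCond χ (B i j)) ∧
      matMulNov (matIdNov n - A) B = matIdNov n ∧
      matMulNov B (matIdNov n - A) = matIdNov n ∧
      matNorm χ B ≤ 1 := by
  classical
  have chi1 : χ 1 = 0 := chi_one hχ
  -- a uniform negative bound `c` for the support of all entries of `A`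
  have key : ∀ i j, ∃ c : ℝ, c < 0 ∧ ∀ g, A i j g ≠ 0 → χ g ≤ c := by
    intro i j
    by_cases h0 : A i j = 0
    · exact ⟨-1, by norm_num, fun g hg => absurd (congrFun h0 g) hg⟩
    · have hle : novNorm χ (A i j) ≤ matNorm χ A := by
        have h1 : novNorm χ (A i j) ≤ ⨆ j', novNorm χ (A i j') :=
          le_ciSup (f := fun j' => novNorm χ (A i j'))
            (Set.Finite.bddAbove (Set.finite_range _)) j
        have h2 : (⨆ j', novNorm χ (A i j')) ≤ matNorm χ A :=
          le_ciSup (f := fun i' => ⨆ j', novNorm χ (A i' j'))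
            (Set.Finite.bddAbove (Set.finite_range _)) i
        exact h1.trans h2
      have hlt : novNorm χ (A i j) < 1 := lt_of_le_of_lt hle hnorm
      rw [novNorm, if_neg h0, Real.exp_lt_one_iff] at hlt
      obtain ⟨c0, hc0⟩ := nov_bound (hA i j)
      have hbdd : BddAbove {x : ℝ | ∃ g, A i j g ≠ 0 ∧ χ g = x} := by
        refine ⟨c0, ?_⟩
        rintro x ⟨g, hg, rfl⟩
        exact hc0 g hg
      exact ⟨_, hlt, fun g hg => le_csSup hbdd ⟨g, hg, rfl⟩⟩
  choose f hf1 hf2 using key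
  set cs : Finset ℝ :=
    insert (-1) (Finset.image (fun p : Fin n × Fin n => f p.1 p.2) Finset.univ) with hcs
  have hcs_ne : cs.Nonempty := ⟨-1, Finset.mem_insert_self _ _⟩
  set c : ℝ := cs.max' hcs_ne with hcdef
  have hc0 : c < 0 := by
    rw [hcdef, Finset.max'_lt_iff]
    intro b hb
    rw [hcs, Finset.mem_insert] at hb
    rcases hb with hb | hb
    · rw [hb]; norm_num
    · obtain ⟨p, _, rfl⟩ := Finset.mem_image.mp hb
      exact hf1 p.1 p.2
  have hcA : ∀ i j g, A i j g ≠ 0 → χ g ≤ c := by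
    intro i j g hg
    refine (hf2 i j g hg).trans (Finset.le_max' _ _ ?_)
    exact Finset.mem_insert_of_mem (Finset.mem_image.mpr ⟨(i, j), Finset.mem_univ _, rfl⟩)
  -- powers of A
  set P := novPow n A with hPdef
  have hP0 : P 0 = matIdNov n := rfl
  have hPs : ∀ k, P (k + 1) = matMulNov A (P k) := fun _ => rfl
  have hPnov : ∀ k, ∀ i j, NovikovCond χ (P k i j) := by
    intro k
    induction k with
    | zero => exact matId_novikov
    | succ k ih => exact matMul_novikov hχ hA ih
  have hPsupp : ∀ k, ∀ i j g, P k i j g ≠ 0 → χ g ≤ (k : ℝ) * c := by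
    intro k
    induction k with
    | zero =>
      intro i j g hg
      have hg' : (if i = j then (novOne : G → ℤ) else 0) g ≠ 0 := hg
      by_cases hij : i = j
      · rw [if_pos hij] at hg'
        have hg1 : g = 1 := by
          by_contra hne
          exact hg' (by simp [novOne, hne])
        simp [hg1, chi1]
      · rw [if_neg hij] at hg'
        exact absurd rfl hg'
    | succ k ih =>
      intro i j g hg
      have hg' : (∑ l : Fin n, novConv (A i l) (P k l j)) g ≠ 0 := hg
      rw [Finset.sum_apply] at hg'
      obtain ⟨l, _, hl⟩ := Finset.exists_ne_zero_of_sum_ne_zero hg'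
      have hle := conv_support_le hχ (fun x hx => hcA i l x hx)
        (fun x hx => ih l j x hx) hl
      push_cast
      linarith
  -- the Neumann series
  set B : Matrix (Fin n) (Fin n) (G → ℤ) :=
    Matrix.of (fun i j g => ∑ᶠ k : ℕ, P k i j g) with hBdef
  have hBapp : ∀ i j g, B i j g = ∑ᶠ k : ℕ, P k i j g := fun _ _ _ => rfl
  have hPvanish : ∀ (N k : ℕ), ∀ i j g, N ≤ k → (N : ℝ) * c < χ g → P k i j g = 0 := by
    intro N k i j g hNk hNg
    by_contra hne
    have h1 := hPsupp k i j g hne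
    have h2 : (k : ℝ) * c ≤ (N : ℝ) * c :=
      mul_le_mul_of_nonpos_right (by exact_mod_cast hNk) hc0.le
    linarith
  have hBtr : ∀ i j g (N : ℕ), (N : ℝ) * c < χ g →
      B i j g = ∑ k ∈ Finset.range N, P k i j g := by
    intro i j g N hN
    rw [hBapp]
    apply finsum_eq_sum_of_support_subset
    intro k hk
    simp only [Function.mem_support] at hk
    simp only [Finset.coe_range, Set.mem_Iio]
    by_contra hlt
    push_neg at hlt
    exact hk (hPvanish N k i j g hlt hN)
  have hexN : ∀ x : ℝ, ∃ N : ℕ, (N : ℝ) * c < x := by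
    intro x
    obtain ⟨N, hN⟩ := exists_nat_gt (x / c)
    exact ⟨N, by rwa [div_lt_iff_of_neg hc0] at hN⟩
  have hBnov : ∀ i j, NovikovCond χ (B i j) := by
    intro i j r
    obtain ⟨K, hK⟩ := hexN r
    have hsub : {g | B i j g ≠ 0 ∧ r ≤ χ g} ⊆
        ⋃ k ∈ Finset.range K, {g | P k i j g ≠ 0 ∧ r ≤ χ g} := by
      rintro g ⟨hg, hrg⟩
      rw [hBapp] at hg
      obtain ⟨k, hk⟩ : ∃ k, P k i j g ≠ 0 := by
        by_contra hcon
        push_neg at hcon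
        exact hg (finsum_eq_zero_of_forall_eq_zero hcon)
      have hkK : k ∈ Finset.range K := by
        rw [Finset.mem_range]
        by_contra hge
        push_neg at hge
        exact hk (hPvanish K k i j g hge (lt_of_lt_of_le hK hrg))
      exact Set.mem_biUnion hkK ⟨hk, hrg⟩
    exact (Set.Finite.biUnion (Finset.range K).finite_toSet
      fun k _ => hPnov k i j r).subset hsub
  have hBbd : ∀ i j g, B i j g ≠ 0 → χ g ≤ 0 := by
    intro i j g hg
    rw [hBapp] at hg
    obtain ⟨k, hk⟩ : ∃ k, P k i j g ≠ 0 := by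
      by_contra hcon
      push_neg at hcon
      exact hg (finsum_eq_zero_of_forall_eq_zero hcon)
    have h1 := hPsupp k i j g hk
    have h2 : (k : ℝ) * c ≤ 0 := mul_nonpos_of_nonneg_of_nonpos (Nat.cast_nonneg k) hc0.le
    linarith
  -- the key identity A·B = B − I (entrywise, pointwise)
  have hABid : ∀ i j g, matMulNov A B i j g = B i j g - matIdNov n i j g := by
    intro i j g
    obtain ⟨N, hN⟩ := hexN (χ g)
    calc matMulNov A B i j g
        = ∑ l : Fin n, novConv (A i l) (B l j) g := by
          rw [matMulNov_apply, Finset.sum_apply]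
      _ = ∑ l : Fin n, novConv (A i l) (∑ k ∈ Finset.range N, P k l j) g := by
          apply Finset.sum_congr rfl
          intro l _
          apply conv_congr_right
          intro h hh
          have hb := hcA i l h hh
          have e : χ h + χ (h⁻¹ * g) = χ g := by rw [← hχ, mul_inv_cancel_left]
          have hlt : (N : ℝ) * c < χ (h⁻¹ * g) := by linarith
          rw [hBtr l j (h⁻¹ * g) N hlt, Finset.sum_apply]
      _ = ∑ l : Fin n, ∑ k ∈ Finset.range N, novConv (A i l) (P k l j) g := by
          apply Finset.sum_congr rfl
          intro l _
          rw [conv_sum_right hχ (hA i l) (Finset.range N) (fun k => P k l j)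
            (fun k _ => hPnov k l j), Finset.sum_apply]
      _ = ∑ k ∈ Finset.range N, P (k + 1) i j g := by
          rw [Finset.sum_comm]
          apply Finset.sum_congr rfl
          intro k _
          rw [hPs, matMulNov_apply, Finset.sum_apply]
      _ = (∑ k ∈ Finset.range (N + 1), P k i j g) - P 0 i j g := by
          rw [Finset.sum_range_succ' (fun k => P k i j g) N]
          ring
      _ = B i j g - matIdNov n i j g := by
          have hlt : ((N + 1 : ℕ) : ℝ) * c < χ g := by push_cast; nlinarith
          rw [← hBtr i j g (N + 1) hlt, hP0]
  -- powers commute with A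
  have hPA : ∀ k, matMulNov (P k) A = matMulNov A (P k) := by
    intro k
    induction k with
    | zero => rw [hP0, matMul_one_left hχ, matMul_one_right hχ]
    | succ k ih =>
      rw [hPs, matMul_assoc hχ A (P k) A hA (hPnov k) hA, ih]
  -- the key identity B·A = B − I (entrywise, pointwise)
  have hBAid : ∀ i j g, matMulNov B A i j g = B i j g - matIdNov n i j g := by
    intro i j g
    obtain ⟨N, hN⟩ := hexN (χ g)
    calc matMulNov B A i j g
        = ∑ l : Fin n, novConv (B i l) (A l j) g := by
          rw [matMulNov_apply, Finset.sum_apply]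
      _ = ∑ l : Fin n, novConv (∑ k ∈ Finset.range N, P k i l) (A l j) g := by
          apply Finset.sum_congr rfl
          intro l _
          apply conv_congr_left
          intro h hh
          have hb := hcA l j (h⁻¹ * g) hh
          have e : χ h + χ (h⁻¹ * g) = χ g := by rw [← hχ, mul_inv_cancel_left]
          have hlt : (N : ℝ) * c < χ h := by linarith
          rw [hBtr i l h N hlt, Finset.sum_apply]
      _ = ∑ l : Fin n, ∑ k ∈ Finset.range N, novConv (P k i l) (A l j) g := by
          apply Finset.sum_congr rfl
          intro l _
          rw [conv_sum_left hχ (hA l j) (Finset.range N) (fun k => P k i l)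
            (fun k _ => hPnov k i l), Finset.sum_apply]
      _ = ∑ k ∈ Finset.range N, P (k + 1) i j g := by
          rw [Finset.sum_comm]
          apply Finset.sum_congr rfl
          intro k _
          rw [hPs k, ← hPA k, matMulNov_apply, Finset.sum_apply]
      _ = (∑ k ∈ Finset.range (N + 1), P k i j g) - P 0 i j g := by
          rw [Finset.sum_range_succ' (fun k => P k i j g) N]
          ring
      _ = B i j g - matIdNov n i j g := by
          have hlt : ((N + 1 : ℕ) : ℝ) * c < χ g := by push_cast; nlinarith
          rw [← hBtr i j g (N + 1) hlt, hP0]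
  refine ⟨B, hBnov, ?_, ?_, ?_⟩
  · rw [matMul_sub_left hχ _ _ _ matId_novikov hA hBnov, matMul_one_left hχ]
    apply Matrix.ext
    intro i j
    funext g
    have e1 : (B - matMulNov A B) i j g = B i j g - matMulNov A B i j g := rfl
    rw [e1, hABid i j g]
    ring
  · rw [matMul_sub_right hχ _ _ _ hBnov matId_novikov hA, matMul_one_right hχ]
    apply Matrix.ext
    intro i j
    funext g
    have e1 : (B - matMulNov B A) i j g = B i j g - matMulNov B A i j g := rfl
    rw [e1, hBAid i j g]
    ring
  · apply Real.iSup_le _ zero_le_one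
    intro i
    apply Real.iSup_le _ zero_le_one
    intro j
    rw [novNorm]
    split
    · exact zero_le_one
    · rw [Real.exp_le_one_iff]
      apply Real.sSup_nonpos
      rintro x ⟨g, hg, rfl⟩
      exact hBbd i j g hg
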